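/- arXiv:1201.4440 — 2 statements merged into one kernel-verified Lean document; each statement's English description precedes it below -/
import Mathlib

section
/- Let τ : Ω → (0,∞] and τ_N : Ω → (0,∞] be measurable, and for ρ > 0 define τ(ρ) and τ_N(ρ) as hitting times such that ρ ↦ τ(ρ)(ω) is nonincreasing and left-continuous for a.e. ω, and suppose that for all ρ and δ > 0: τ(ρ+δ) ≤ liminf_N τ_N(ρ) ≤ limsup_N τ_N(ρ) ≤ τ(ρ−δ) almost surely, and τ(ρ) < ∞ a.s. Then for all ρ outside a Lebesgue-null set of (0,∞), τ_N(ρ) → τ(ρ) almost surely as N → ∞. -/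
open Filter MeasureTheory

/-- Almost sure convergence of the approximated hitting times at almost every radius. -/
theorem stmt8 {Ω : Type*} [MeasurableSpace Ω] (P : Measure Ω) [IsProbabilityMeasure P]
    (τ : ℝ → Ω → ENNReal) (τN : ℕ → ℝ → Ω → ENNReal)
    (hmeas : ∀ ρ, Measurable (τ ρ))
    (hmeasN : ∀ n ρ, Measurable (τN n ρ))
    (hmono : ∀ᵐ ω ∂P, ∀ ρ₁ ρ₂ : ℝ, 0 < ρ₁ → ρ₁ ≤ ρ₂ → τ ρ₂ ω ≤ τ ρ₁ ω)
    (hleft : ∀ᵐ ω ∂P, ∀ ρ : ℝ, 0 < ρ →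
      Tendsto (fun s => τ s ω) (nhdsWithin ρ (Set.Iio ρ)) (nhds (τ ρ ω)))
    (hfin : ∀ ρ : ℝ, 0 < ρ → ∀ᵐ ω ∂P, τ ρ ω < ⊤)
    (hsand : ∀ ρ : ℝ, 0 < ρ → ∀ δ : ℝ, 0 < δ → ∀ᵐ ω ∂P,
      τ (ρ + δ) ω ≤ liminf (fun n => τN n ρ ω) atTop ∧
      limsup (fun n => τN n ρ ω) atTop ≤ τ (ρ - δ) ω) :
    ∃ s : Set ℝ, volume s = 0 ∧
      ∀ ρ : ℝ, 0 < ρ → ρ ∉ s →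
        ∀ᵐ ω ∂P, Tendsto (fun n => τN n ρ ω) atTop (nhds (τ ρ ω)) := by
  classical
  -- left-limit and right-limit functions (via rationals), jointly measurable
  set T : ℝ → Ω → ENNReal :=
    fun ρ ω => ⨅ q : ℚ, if 0 < (q : ℝ) ∧ (q : ℝ) < ρ then τ q ω else ⊤ with hTdef
  set σ' : ℝ → Ω → ENNReal :=
    fun ρ ω => ⨆ q : ℚ, if ρ < (q : ℝ) then τ q ω else 0 with hσdef
  have hTm : Measurable (fun p : ℝ × Ω => T p.1 p.2) := by
    apply Measurable.iInf
    intro q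
    have hset : MeasurableSet {p : ℝ × Ω | 0 < (q : ℝ) ∧ (q : ℝ) < p.1} := by
      rcases lt_or_ge 0 (q : ℝ) with h | h
      · have : {p : ℝ × Ω | 0 < (q : ℝ) ∧ (q : ℝ) < p.1}
            = (fun p : ℝ × Ω => p.1) ⁻¹' Set.Ioi (q : ℝ) := by
          ext p; simp [h]
        rw [this]; exact measurable_fst measurableSet_Ioi
      · have : {p : ℝ × Ω | 0 < (q : ℝ) ∧ (q : ℝ) < p.1} = ∅ := by
          ext p; simp [not_lt.2 h]
        rw [this]; exact MeasurableSet.empty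
    exact Measurable.ite hset ((hmeas q).comp measurable_snd) measurable_const
  have hσm : Measurable (fun p : ℝ × Ω => σ' p.1 p.2) := by
    apply Measurable.iSup
    intro q
    have hset : MeasurableSet {p : ℝ × Ω | p.1 < (q : ℝ)} :=
      measurable_fst measurableSet_Iio
    exact Measurable.ite hset ((hmeas q).comp measurable_snd) measurable_const
  -- basic comparison: for ρ₁ < ρ₂ (both positive), T ρ₂ ≤ σ' ρ₁
  have hcomp : ∀ (ω : Ω) (ρ₁ ρ₂ : ℝ), 0 < ρ₁ → ρ₁ < ρ₂ → T ρ₂ ω ≤ σ' ρ₁ ω := by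
    intro ω ρ₁ ρ₂ h1 h12
    obtain ⟨q, hq1, hq2⟩ := exists_rat_btwn h12
    have hq0 : 0 < (q : ℝ) := h1.trans hq1
    calc T ρ₂ ω ≤ if 0 < (q : ℝ) ∧ (q : ℝ) < ρ₂ then τ q ω else ⊤ := iInf_le _ q
      _ = τ q ω := by rw [if_pos ⟨hq0, hq2⟩]
      _ = if ρ₁ < (q : ℝ) then τ q ω else 0 := by rw [if_pos hq1]
      _ ≤ σ' ρ₁ ω := le_iSup (fun q : ℚ => if ρ₁ < (q : ℝ) then τ q ω else 0) q
  -- for each ω, the set of ρ where σ' < T is countable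
  have hcount : ∀ ω : Ω, Set.Countable {ρ : ℝ | 0 < ρ ∧ σ' ρ ω < T ρ ω} := by
    intro ω
    set S := {ρ : ℝ | 0 < ρ ∧ σ' ρ ω < T ρ ω} with hS
    have hrat : ∀ ρ ∈ S, ∃ q : ℚ, 0 ≤ q ∧ σ' ρ ω < Real.toNNReal q ∧
        ((Real.toNNReal q : ENNReal)) < T ρ ω := by
      intro ρ hρ
      exact ENNReal.lt_iff_exists_rat_btwn.1 hρ.2
    choose! g hg0 hg1 hg2 using hrat
    have hanti : ∀ ρ₁ ∈ S, ∀ ρ₂ ∈ S, ρ₁ < ρ₂ →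
        ((Real.toNNReal (g ρ₂) : ENNReal)) < Real.toNNReal (g ρ₁) := by
      intro ρ₁ h₁ ρ₂ h₂ h12
      calc ((Real.toNNReal (g ρ₂) : ENNReal)) < T ρ₂ ω := hg2 ρ₂ h₂
        _ ≤ σ' ρ₁ ω := hcomp ω ρ₁ ρ₂ h₁.1 h12
        _ < Real.toNNReal (g ρ₁) := hg1 ρ₁ h₁
    have hinj : Set.InjOn g S := by
      intro ρ₁ h₁ ρ₂ h₂ heq
      by_contra hne
      rcases lt_or_gt_of_ne hne with h | h
      · exact absurd (heq ▸ hanti ρ₁ h₁ ρ₂ h₂ h) (lt_irrefl _)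
      · exact absurd (heq ▸ hanti ρ₂ h₂ ρ₁ h₁ h) (lt_irrefl _)
    exact Set.countable_iff_exists_injOn.2
      ⟨fun ρ => Encodable.encode (g ρ),
        fun ρ₁ h₁ ρ₂ h₂ h => hinj h₁ h₂ (Encodable.encode_injective h)⟩
  -- for good ω, T ρ ω = τ ρ ω for all ρ > 0
  have hTτ : ∀ ω : Ω,
      (∀ ρ₁ ρ₂ : ℝ, 0 < ρ₁ → ρ₁ ≤ ρ₂ → τ ρ₂ ω ≤ τ ρ₁ ω) →
      (∀ ρ : ℝ, 0 < ρ →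
        Tendsto (fun s => τ s ω) (nhdsWithin ρ (Set.Iio ρ)) (nhds (τ ρ ω))) →
      ∀ ρ : ℝ, 0 < ρ → T ρ ω = τ ρ ω := by
    intro ω hm hl ρ hρ
    refine le_antisymm ?_ ?_
    · -- approximate ρ from the left by rationals
      have hsel : ∀ n : ℕ, ∃ q : ℚ, max (ρ - 1 / (n + 1)) (ρ / 2) < (q : ℝ) ∧ (q : ℝ) < ρ := by
        intro n
        apply exists_rat_btwn
        apply max_lt
        · have hp : (0:ℝ) < 1 / (n + 1) := by positivity
          linarith
        · linarith
      choose q hq1 hq2 using hsel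
      have htendq : Tendsto (fun n => ((q n : ℝ))) atTop (nhds ρ) := by
        apply tendsto_of_tendsto_of_tendsto_of_le_of_le
          (g := fun n : ℕ => ρ - 1 / (n + 1)) (h := fun _ : ℕ => ρ)
        · have : Tendsto (fun n : ℕ => 1 / ((n : ℝ) + 1)) atTop (nhds 0) :=
            tendsto_one_div_add_atTop_nhds_zero_nat
          have := (tendsto_const_nhds (x := ρ) (f := atTop)).sub this
          simpa using this
        · exact tendsto_const_nhds
        · intro n; exact le_of_lt (lt_of_le_of_lt (le_max_left _ _) (hq1 n))
        · intro n; exact le_of_lt (hq2 n)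
      have htendq' : Tendsto (fun n => ((q n : ℝ))) atTop (nhdsWithin ρ (Set.Iio ρ)) :=
        tendsto_nhdsWithin_of_tendsto_nhds_of_eventually_within _ htendq
          (Eventually.of_forall fun n => hq2 n)
      have htendτ : Tendsto (fun n => τ (q n) ω) atTop (nhds (τ ρ ω)) :=
        (hl ρ hρ).comp htendq'
      refine ge_of_tendsto' htendτ fun n => ?_
      have hq0 : 0 < ((q n : ℝ)) := lt_of_le_of_lt (by positivity) (lt_of_le_of_lt (le_max_right _ _) (hq1 n))
      calc T ρ ω ≤ if 0 < ((q n : ℝ)) ∧ ((q n : ℝ)) < ρ then τ (q n) ω else ⊤ := iInf_le _ (q n)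
        _ = τ (q n) ω := by rw [if_pos ⟨hq0, hq2 n⟩]
    · refine le_iInf fun qq => ?_
      split_ifs with h
      · exact hm qq ρ h.1 (le_of_lt h.2)
      · exact le_top
  -- Fubini / Tonelli step
  set μ : Measure ℝ := volume.restrict (Set.Ioi (0 : ℝ)) with hμdef
  set A : Set (ℝ × Ω) := {p | 0 < p.1 ∧ σ' p.1 p.2 < T p.1 p.2} with hAdef
  have hA : MeasurableSet A := by
    have h1 : MeasurableSet {p : ℝ × Ω | 0 < p.1} := measurable_fst measurableSet_Ioi
    have h2 : MeasurableSet {p : ℝ × Ω | σ' p.1 p.2 < T p.1 p.2} := measurableSet_lt hσm hTm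
    exact h1.inter h2
  have hprod0 : (μ.prod P) A = 0 := by
    rw [Measure.prod_apply_symm hA]
    have : ∀ ω : Ω, μ ((fun ρ => (ρ, ω)) ⁻¹' A) = 0 := by
      intro ω
      have hsub : (fun ρ => (ρ, ω)) ⁻¹' A = {ρ : ℝ | 0 < ρ ∧ σ' ρ ω < T ρ ω} := rfl
      have hv : volume ((fun ρ => (ρ, ω)) ⁻¹' A) = 0 := by
        rw [hsub]; exact (hcount ω).measure_zero _
      exact le_antisymm (le_trans (Measure.restrict_le_self _) (le_of_eq hv)) zero_le
    simp [this]
  have hf_meas : Measurable fun ρ => P (Prod.mk ρ ⁻¹' A) :=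
    measurable_measure_prodMk_left hA
  have hint0 : ∫⁻ ρ, P (Prod.mk ρ ⁻¹' A) ∂μ = 0 := by
    rw [← Measure.prod_apply hA]; exact hprod0
  have hae0 : ∀ᵐ ρ ∂μ, P (Prod.mk ρ ⁻¹' A) = 0 := by
    have := (lintegral_eq_zero_iff hf_meas).1 hint0
    filter_upwards [this] with ρ h using h
  -- the exceptional set
  refine ⟨{ρ : ℝ | P (Prod.mk ρ ⁻¹' A) ≠ 0} ∩ Set.Ioi 0, ?_, ?_⟩
  · have := hae0
    rw [ae_iff] at this
    have hre : μ {ρ : ℝ | ¬ P (Prod.mk ρ ⁻¹' A) = 0}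
        = volume ({ρ : ℝ | P (Prod.mk ρ ⁻¹' A) ≠ 0} ∩ Set.Ioi 0) := by
      rw [hμdef, Measure.restrict_apply' measurableSet_Ioi]
    rw [hre] at this
    exact this
  · intro ρ hρ hρs
    have hfρ : P (Prod.mk ρ ⁻¹' A) = 0 := by
      by_contra h
      exact hρs ⟨h, hρ⟩
    -- a.e. T ρ ω ≤ σ' ρ ω
    have hTσ : ∀ᵐ ω ∂P, T ρ ω ≤ σ' ρ ω := by
      rw [ae_iff]
      have : {ω : Ω | ¬ T ρ ω ≤ σ' ρ ω} = Prod.mk ρ ⁻¹' A := by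
        ext ω
        simp only [Set.mem_setOf_eq, Set.mem_preimage, hAdef, not_le]
        exact ⟨fun h => ⟨hρ, h⟩, fun h => h.2⟩
      rw [this]; exact hfρ
    -- sandwich for all k
    have hsand' : ∀ᵐ ω ∂P, ∀ k : ℕ,
        τ (ρ + 1 / (k + 1)) ω ≤ liminf (fun n => τN n ρ ω) atTop ∧
        limsup (fun n => τN n ρ ω) atTop ≤ τ (ρ - 1 / (k + 1)) ω :=
      ae_all_iff.2 fun k => hsand ρ hρ (1 / (k + 1)) (by positivity)
    filter_upwards [hmono, hleft, hTσ, hsand'] with ω hm hl hts hk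
    have hTeq : T ρ ω = τ ρ ω := hTτ ω hm hl ρ hρ
    -- limsup ≤ τ ρ ω
    have hsup : limsup (fun n => τN n ρ ω) atTop ≤ τ ρ ω := by
      have htend : Tendsto (fun k : ℕ => τ (ρ - 1 / (k + 1)) ω) atTop (nhds (τ ρ ω)) := by
        apply (hl ρ hρ).comp
        apply tendsto_nhdsWithin_of_tendsto_nhds_of_eventually_within
        · have h1 : Tendsto (fun k : ℕ => 1 / ((k : ℝ) + 1)) atTop (nhds 0) :=
            tendsto_one_div_add_atTop_nhds_zero_nat
          have := (tendsto_const_nhds (x := ρ) (f := atTop)).sub h1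
          simpa using this
        · refine Eventually.of_forall fun k => ?_
          simp only [Set.mem_Iio]
          have : (0 : ℝ) < 1 / (k + 1) := by positivity
          linarith
      exact ge_of_tendsto' htend fun k => (hk k).2
    -- liminf ≥ τ ρ ω
    have hinf : τ ρ ω ≤ liminf (fun n => τN n ρ ω) atTop := by
      rw [← hTeq]
      refine le_trans hts ?_
      refine iSup_le fun qq => ?_
      split_ifs with h
      · obtain ⟨k, hkk⟩ := exists_nat_one_div_lt (sub_pos.2 h)
        have h1 : ρ + 1 / (k + 1) ≤ (qq : ℝ) := by
          have := hkk.le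
          linarith
        have h0 : (0 : ℝ) < ρ + 1 / (k + 1) := by positivity
        exact le_trans (hm (ρ + 1 / (k + 1)) qq h0 h1) (hk k).1
      · exact zero_le
    exact tendsto_of_le_liminf_of_limsup_le hinf hsup
end

section
/- Fix λ > 0, ε > 0, δ > 0 and a, b ∈ ℝ. Among all C¹ functions f : [−δ, δ] → ℝ with f(−δ) = a and f(δ) = b, the integral ∫_{−δ}^{δ} |f'(t)|² e^{−λt²/(2ε)} dt is minimized by f(t) = (b−a)·(∫_{−δ}^t e^{λs²/(2ε)} ds)/(∫_{−δ}^{δ} e^{λs²/(2ε)} ds) + a, and the minimum value equals (b−a)² / ∫_{−δ}^{δ} e^{λs²/(2ε)} ds. -/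
open MeasureTheory intervalIntegral Real Set

lemma cs_integral {μ : Measure ℝ} {u v : ℝ → ℝ}
    (hu : Integrable (fun t => u t ^ 2) μ) (hv : Integrable (fun t => v t ^ 2) μ)
    (huv : Integrable (fun t => u t * v t) μ) :
    (∫ t, u t * v t ∂μ) ^ 2 ≤ (∫ t, u t ^ 2 ∂μ) * (∫ t, v t ^ 2 ∂μ) := by
  set A := ∫ t, u t ^ 2 ∂μ
  set B := ∫ t, u t * v t ∂μ
  set C := ∫ t, v t ^ 2 ∂μ
  have key : ∀ c : ℝ, 0 ≤ C * (c * c) + (-2 * B) * c + A := by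
    intro c
    have h1 : (0:ℝ) ≤ ∫ t, (u t - c * v t) ^ 2 ∂μ :=
      integral_nonneg fun t => sq_nonneg _
    have h2 : ∫ t, (u t - c * v t) ^ 2 ∂μ = A - 2 * c * B + c ^ 2 * C := by
      have : ∀ t, (u t - c * v t) ^ 2
          = u t ^ 2 - (2 * c) * (u t * v t) + c ^ 2 * v t ^ 2 := by intro t; ring
      simp_rw [this]
      have i0 : Integrable (fun t => 2 * c * (u t * v t)) μ := huv.const_mul _
      have i2 : Integrable (fun t => c ^ 2 * v t ^ 2) μ := hv.const_mul _
      have i1 : Integrable (fun t => u t ^ 2 - 2 * c * (u t * v t)) μ := hu.sub i0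
      rw [MeasureTheory.integral_add i1 i2, MeasureTheory.integral_sub hu i0,
        MeasureTheory.integral_const_mul, MeasureTheory.integral_const_mul]
    nlinarith [h1, h2]
  have := discrim_le_zero key
  simp only [discrim] at this
  nlinarith [this]

/-- Explicit one-dimensional capacity minimization: the harmonic function
minimizes the weighted Dirichlet integral, with minimum value
(b−a)²/∫ e^{λs²/(2ε)} ds. -/
theorem stmt13 (lam eps δ a b : ℝ) (hlam : 0 < lam) (heps : 0 < eps) (hδ : 0 < δ) :
    (∀ f f' : ℝ → ℝ,
      (∀ t ∈ Set.Icc (-δ) δ, HasDerivWithinAt f (f' t) (Set.Icc (-δ) δ) t) →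
      ContinuousOn f' (Set.Icc (-δ) δ) →
      f (-δ) = a → f δ = b →
      (b - a)^2 / (∫ s in -δ..δ, Real.exp (lam*s^2/(2*eps)))
        ≤ ∫ t in -δ..δ, (f' t)^2 * Real.exp (-lam*t^2/(2*eps))) ∧
    (let F : ℝ → ℝ := fun t => (b - a) *
        (∫ s in -δ..t, Real.exp (lam*s^2/(2*eps))) /
        (∫ s in -δ..δ, Real.exp (lam*s^2/(2*eps))) + a
     F (-δ) = a ∧ F δ = b ∧
      (∫ t in -δ..δ, (deriv F t)^2 * Real.exp (-lam*t^2/(2*eps)))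
        = (b - a)^2 / ∫ s in -δ..δ, Real.exp (lam*s^2/(2*eps))) := by
  have hle : (-δ : ℝ) ≤ δ := by linarith
  have hlt : (-δ : ℝ) < δ := by linarith
  set w : ℝ → ℝ := fun s => Real.exp (lam*s^2/(2*eps)) with hw
  have hwc : Continuous w := by fun_prop
  have hwint : IntervalIntegrable w volume (-δ) δ := hwc.intervalIntegrable _ _
  set I : ℝ := ∫ s in -δ..δ, w s with hI
  have hIpos : 0 < I := intervalIntegral_pos_of_pos hwint (fun x => Real.exp_pos _) hlt
  constructor
  · intro f f' hderiv hf'c hfa hfb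
    -- FTC: ∫ f' = b - a
    have hfc : ContinuousOn f (Set.Icc (-δ) δ) := fun t ht =>
      (hderiv t ht).continuousWithinAt
    have hf'int : IntervalIntegrable f' volume (-δ) δ := by
      rw [intervalIntegrable_iff_integrableOn_Icc_of_le hle]
      exact hf'c.integrableOn_Icc
    have hFTC : ∫ t in -δ..δ, f' t = b - a := by
      rw [integral_eq_sub_of_hasDerivAt_of_le hle hfc
        (fun x hx => (hderiv x (Set.mem_Icc_of_Ioo hx)).hasDerivAt
          (Icc_mem_nhds hx.1 hx.2)) hf'int, hfa, hfb]
    -- Cauchy–Schwarz with u = f' e^{-w/2}, v = e^{+w/2}, over restricted measure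
    set μ : Measure ℝ := volume.restrict (Set.Ioc (-δ) δ)
    set u : ℝ → ℝ := fun t => f' t * Real.exp (-lam*t^2/(4*eps))
    set v : ℝ → ℝ := fun t => Real.exp (lam*t^2/(4*eps))
    have hiu : Integrable (fun t => u t ^ 2) μ := by
      apply ((hf'c.pow 2).mul (by fun_prop : Continuous
        (fun t : ℝ => (Real.exp (-lam*t^2/(4*eps)))^2)).continuousOn).integrableOn_Icc.mono_set
        (Set.Ioc_subset_Icc_self) |>.congr
      · filter_upwards with t
        simp only [u, Pi.mul_apply, Pi.pow_apply]; ring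
    have hiv : Integrable (fun t => v t ^ 2) μ :=
      ((by fun_prop : Continuous (fun t : ℝ => v t ^ 2)).integrableOn_Icc).mono_set
        Set.Ioc_subset_Icc_self
    have hiuv : Integrable (fun t => u t * v t) μ := by
      have : Integrable f' μ :=
        hf'c.integrableOn_Icc.mono_set Set.Ioc_subset_Icc_self
      apply this.congr
      · filter_upwards with t
        simp only [u, v, mul_assoc, ← Real.exp_add]
        rw [show -lam*t^2/(4*eps) + lam*t^2/(4*eps) = 0 by ring, Real.exp_zero, mul_one]
    have hcs := cs_integral hiu hiv hiuv
    have huv_eq : (∫ t, u t * v t ∂μ) = b - a := by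
      rw [← hFTC, intervalIntegral.integral_of_le hle]
      apply MeasureTheory.integral_congr_ae
      filter_upwards with t
      simp only [u, v, mul_assoc, ← Real.exp_add]
      rw [show -lam*t^2/(4*eps) + lam*t^2/(4*eps) = 0 by ring, Real.exp_zero, mul_one]
    have hu2_eq : (∫ t, u t ^ 2 ∂μ) = ∫ t in -δ..δ, (f' t)^2 * Real.exp (-lam*t^2/(2*eps)) := by
      rw [intervalIntegral.integral_of_le hle]
      apply MeasureTheory.integral_congr_ae
      filter_upwards with t
      simp only [u, mul_pow, ← Real.exp_add, sq (Real.exp _)]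
      rw [show -lam*t^2/(4*eps) + -lam*t^2/(4*eps) = -lam*t^2/(2*eps) by ring]
    have hv2_eq : (∫ t, v t ^ 2 ∂μ) = I := by
      rw [hI, intervalIntegral.integral_of_le hle]
      apply MeasureTheory.integral_congr_ae
      filter_upwards with t
      simp only [v, w, ← Real.exp_add, sq (Real.exp _)]
      rw [show lam*t^2/(4*eps) + lam*t^2/(4*eps) = lam*t^2/(2*eps) by ring]
    rw [huv_eq, hu2_eq, hv2_eq] at hcs
    rw [div_le_iff₀ hIpos]
    linarith
  · intro F
    have hG : ∀ t : ℝ, HasDerivAt (fun x => ∫ s in -δ..x, w s) (w t) t := fun t =>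
      intervalIntegral.integral_hasDerivAt_right (hwc.intervalIntegrable _ _)
        (hwc.stronglyMeasurableAtFilter _ _) hwc.continuousAt
    have hF : ∀ t : ℝ, HasDerivAt F ((b - a) * w t / I) t := by
      intro t
      have := (((hG t).const_mul (b - a)).div_const I).add_const a
      simpa [F, mul_div_assoc] using this
    have hderivF : ∀ t, deriv F t = (b - a) * w t / I := fun t => (hF t).deriv
    refine ⟨?_, ?_, ?_⟩
    · simp [F]
    · simp only [F, ← hI]
      field_simp
      ring
    · have : ∀ t, (deriv F t)^2 * Real.exp (-lam*t^2/(2*eps))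
          = (b - a)^2 / I^2 * w t := by
        intro t
        rw [hderivF]
        simp only [w]
        rw [show ((b-a) * Real.exp (lam*t^2/(2*eps)) / I)^2 * Real.exp (-lam*t^2/(2*eps))
            = (b-a)^2 / I^2 * (Real.exp (lam*t^2/(2*eps)) * Real.exp (-lam*t^2/(2*eps))
              * Real.exp (lam*t^2/(2*eps))) from by ring]
        rw [← Real.exp_add, show lam*t^2/(2*eps) + -lam*t^2/(2*eps) = 0 by ring,
          Real.exp_zero, one_mul]
      simp_rw [this]
      rw [intervalIntegral.integral_const_mul, ← hI]
      field_simp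
end
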